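/- Let δ ∈ ℂ∖{0} be a non-root of unity. Then there is no δ satisfying simultaneously 1 + δ⁻¹ = 1/((1−δ⁻¹)(1−δ²)) + (2δ+θ)/(1−δ)² and 1 + δ⁻³ = 1/((1−δ⁻³)(1−δ⁶)) + (2 + 4δ³ + (1+δ+δ²)θ)/(3(1−δ³)²) for some θ ∈ ℂ, unless δ satisfies (1+δ)(3 + 5δ² − 2δ³ + 9δ⁴ − 2δ⁵ + 5δ⁶ + 3δ⁸) = 0. More precisely: eliminating θ from the two equations yields the polynomial equation (1+δ)(3 + 5δ² − 2δ³ + 9δ⁴ − 2δ⁵ + 5δ⁶ + 3δ⁸) = 0. -/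
import Mathlib


/-- Eliminating θ from the two fixed point formula equations for f and f³
yields (1+δ)(3 + 5δ² − 2δ³ + 9δ⁴ − 2δ⁵ + 5δ⁶ + 3δ⁸) = 0. -/
theorem stmt12 (δ θ : ℂ) (hδ0 : δ ≠ 0)
    (h1 : δ ≠ 1) (h2 : δ ^ 2 ≠ 1) (h3 : δ ^ 3 ≠ 1) (h6 : δ ^ 6 ≠ 1)
    (e1 : 1 + δ⁻¹ =
      1 / ((1 - δ⁻¹) * (1 - δ ^ 2)) + (2 * δ + θ) / (1 - δ) ^ 2)
    (e2 : 1 + δ⁻¹ ^ 3 =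
      1 / ((1 - δ⁻¹ ^ 3) * (1 - δ ^ 6)) +
        (2 + 4 * δ ^ 3 + (1 + δ + δ ^ 2) * θ) / (3 * (1 - δ ^ 3) ^ 2)) :
    (1 + δ) * (3 + 5 * δ ^ 2 - 2 * δ ^ 3 + 9 * δ ^ 4 - 2 * δ ^ 5 + 5 * δ ^ 6 +
      3 * δ ^ 8) = 0 := by
  have hd1 : (1:ℂ) - δ ≠ 0 := sub_ne_zero.mpr (fun h => h1 h.symm)
  have hd2 : (1:ℂ) - δ^2 ≠ 0 := sub_ne_zero.mpr (fun h => h2 h.symm)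
  have hd3 : (1:ℂ) - δ^3 ≠ 0 := sub_ne_zero.mpr (fun h => h3 h.symm)
  have hd6 : (1:ℂ) - δ^6 ≠ 0 := sub_ne_zero.mpr (fun h => h6 h.symm)
  have hi1 : (1:ℂ) - δ⁻¹ ≠ 0 := sub_ne_zero.mpr (fun h => h1 (inv_eq_one.mp h.symm))
  have hi3 : (1:ℂ) - δ⁻¹^3 ≠ 0 := by
    rw [inv_pow]; exact sub_ne_zero.mpr (fun h => h3 (inv_eq_one.mp h.symm))
  have hd1' : δ - 1 ≠ 0 := sub_ne_zero.mpr h1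
  have hd3' : δ^3 - 1 ≠ 0 := sub_ne_zero.mpr h3
  have hp1 : (1:ℂ) + δ + δ^2 ≠ 0 := by
    intro h
    apply hd3'
    linear_combination (δ - 1) * h
  have hm1 : (1:ℂ) + δ ≠ 0 := by
    intro h
    apply hd2
    linear_combination (1 - δ) * h
  field_simp at e1 e2
  have key : ((1 + δ) * (3 + 5 * δ ^ 2 - 2 * δ ^ 3 + 9 * δ ^ 4 - 2 * δ ^ 5 + 5 * δ ^ 6 +
      3 * δ ^ 8)) * ((1 - δ)^8 * (1 + δ)^2 * (1 + δ + δ^2)^2) = 0 := by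
    linear_combination
      ((δ^2 + δ^4 + δ^6) * ((1 - δ)^4 * (1 + δ) * (1 + δ + δ^2)^2)) * e1
      + (-(1 - δ)^4 * (1 + δ)) * e2
  have hnz : ((1 - δ)^8 * (1 + δ)^2 * (1 + δ + δ^2)^2 : ℂ) ≠ 0 := by
    exact mul_ne_zero (mul_ne_zero (pow_ne_zero _ hd1) (pow_ne_zero _ hm1)) (pow_ne_zero _ hp1)
  exact (mul_eq_zero.mp key).resolve_right hnz
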